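/- arXiv:1211.5559 — 5 statements merged into one kernel-verified Lean document; each statement's English description precedes it below -/
import Mathlib

section
/- For every t > 0 and x ∈ ℝⁿ, the function ρ_t(x) = ((2π(e^{2tk}-1))/(k e^{2tk}))^{-n/2} · exp(-k|x|²/(2(e^{2tk}-1))) satisfies the parabolic equation ∂_t ρ_t = Δρ_t - k⟨x, ∇ρ_t⟩, where k > 0 is a constant. -/
open Real Set Filter

noncomputable def lap (n : ℕ) (f : EuclideanSpace ℝ (Fin n) → ℝ) (x : EuclideanSpace ℝ (Fin n)) : ℝ :=
  ∑ i, fderiv ℝ (fun y => fderiv ℝ f y (EuclideanSpace.single i 1)) x (EuclideanSpace.single i 1)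

noncomputable def gauss {n : ℕ} (c A : ℝ) (z : EuclideanSpace ℝ (Fin n)) : ℝ :=
  A * Real.exp (-c * ‖z‖^2)

theorem gauss_fderiv {n : ℕ} (c A : ℝ) (y : EuclideanSpace ℝ (Fin n)) :
    HasFDerivAt (gauss c A) ((gauss c A y * (-2*c)) • innerSL ℝ y) y := by
  have h1 : HasFDerivAt (fun z : EuclideanSpace ℝ (Fin n) => ‖z‖^2) (2 • innerSL ℝ y) y :=
    (hasStrictFDerivAt_norm_sq y).hasFDerivAt
  have h2 := ((h1.const_mul (-c)).exp.const_mul A)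
  refine h2.congr_fderiv ?_
  ext z
  simp [gauss, mul_comm, mul_assoc, mul_left_comm]

theorem gauss_inner_gradient {n : ℕ} (c A : ℝ) (x : EuclideanSpace ℝ (Fin n)) :
    (inner ℝ x (gradient (gauss c A) x) : ℝ) = gauss c A x * (-2*c) * ‖x‖^2 := by
  have hgrad : gradient (gauss c A) x = (gauss c A x * (-2*c)) • x := by
    have : HasGradientAt (gauss c A) ((gauss c A x * (-2*c)) • x) x := by
      rw [hasGradientAt_iff_hasFDerivAt]
      refine (gauss_fderiv c A x).congr_fderiv ?_
      ext z
      simp [InnerProductSpace.toDual_apply_apply, inner_smul_left]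
    exact this.gradient
  rw [hgrad, real_inner_smul_right, real_inner_self_eq_norm_sq]

theorem gauss_lap {n : ℕ} (c A : ℝ) (x : EuclideanSpace ℝ (Fin n)) :
    lap n (gauss c A) x = gauss c A x * (4*c^2*‖x‖^2 - 2*c*n) := by
  unfold lap
  have hfd : ∀ i : Fin n, (fun y : EuclideanSpace ℝ (Fin n) =>
      fderiv ℝ (gauss c A) y (EuclideanSpace.single i 1)) =
      fun y => gauss c A y * (-2*c) * y i := by
    intro i
    funext y
    rw [(gauss_fderiv c A y).fderiv]
    simp [EuclideanSpace.inner_single_right]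
  have key : ∀ i : Fin n, fderiv ℝ (fun y : EuclideanSpace ℝ (Fin n) =>
      fderiv ℝ (gauss c A) y (EuclideanSpace.single i 1)) x (EuclideanSpace.single i 1)
      = gauss c A x * (4*c^2 * (x i)^2 - 2*c) := by
    intro i
    rw [hfd i]
    have hinner : ∀ y : EuclideanSpace ℝ (Fin n),
        y i = (innerSL ℝ (EuclideanSpace.single i (1:ℝ))) y := by
      intro y; simp [EuclideanSpace.inner_single_left]
    have h1 : HasFDerivAt (fun y : EuclideanSpace ℝ (Fin n) => gauss c A y * (-2*c))
        ((-2*c) • ((gauss c A x * (-2*c)) • innerSL ℝ x)) x := (gauss_fderiv c A x).mul_const _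
    have h2 : HasFDerivAt (fun y : EuclideanSpace ℝ (Fin n) => y i)
        (innerSL ℝ (EuclideanSpace.single i (1:ℝ))) x := by
      have := (innerSL ℝ (EuclideanSpace.single i (1:ℝ))).hasFDerivAt (x := x)
      exact this.congr_fderiv rfl |>.congr_of_eventuallyEq (Filter.Eventually.of_forall hinner)
    have h3 : HasFDerivAt (fun y : EuclideanSpace ℝ (Fin n) => gauss c A y * (-2*c) * y i) _ x := h1.mul h2
    rw [h3.fderiv]
    simp [EuclideanSpace.inner_single_right, EuclideanSpace.inner_single_left]
    ring
  rw [Finset.sum_congr rfl (fun i _ => key i)]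
  have hns : ‖x‖^2 = ∑ i, x i ^ 2 := by
    rw [EuclideanSpace.norm_eq, Real.sq_sqrt (by positivity)]
    simp [sq_abs]
  rw [← Finset.mul_sum, hns, Finset.sum_sub_distrib]
  simp [Finset.mul_sum]
  left; ring

theorem stmt0 (n : ℕ) (k : ℝ) (hk : 0 < k)
    (ρ : ℝ → EuclideanSpace ℝ (Fin n) → ℝ)
    (hρ : ∀ t x, ρ t x =
      ((2 * π * (Real.exp (2 * t * k) - 1)) / (k * Real.exp (2 * t * k))) ^ (-(n : ℝ) / 2) *
        Real.exp (-k * ‖x‖ ^ 2 / (2 * (Real.exp (2 * t * k) - 1)))) :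
    ∀ t, 0 < t → ∀ x,
      deriv (fun s => ρ s x) t = lap n (ρ t) x - k * inner ℝ x (gradient (ρ t) x) := by
  intro t ht x
  have he1 : 1 < Real.exp (2 * t * k) := by
    rw [show (1:ℝ) = Real.exp 0 by simp]
    exact Real.exp_lt_exp.2 (by positivity)
  set e := Real.exp (2 * t * k) with he
  have he0 : (0:ℝ) < e := lt_trans one_pos he1
  have hg : (0:ℝ) < e - 1 := by linarith
  have hkne : k ≠ 0 := ne_of_gt hk
  have hene : e ≠ 0 := ne_of_gt he0
  have hgne : e - 1 ≠ 0 := ne_of_gt hg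
  set C := ‖x‖ ^ 2 with hCdef
  set c := k / (2 * (e - 1)) with hc
  set A := ((2 * π * (e - 1)) / (k * e)) ^ (-(n : ℝ) / 2) with hA
  have hBpos : (0:ℝ) < (2 * π * (e - 1)) / (k * e) := by positivity
  have hBne : (2 * π * (e - 1)) / (k * e) ≠ 0 := ne_of_gt hBpos
  -- the spatial function
  have hρt : ρ t = gauss c A := by
    funext y
    rw [hρ t y, gauss]
    congr 2
    rw [hc]
    ring
  -- time derivative
  have hu : HasDerivAt (fun s => Real.exp (2 * s * k)) (2 * k * e) t := by
    have h : HasDerivAt (fun s : ℝ => 2 * s * k) (2 * k) t := by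
      simpa using ((hasDerivAt_id t).const_mul 2).mul_const k
    have h2 := h.exp
    simp only [← he] at h2
    convert h2 using 1
    ring
  have hu1 : HasDerivAt (fun s => Real.exp (2 * s * k) - 1) (2 * k * e) t := hu.sub_const 1
  have hB : HasDerivAt (fun s => (2 * π * (Real.exp (2 * s * k) - 1)) / (k * Real.exp (2 * s * k)))
      (((2 * π * (2 * k * e)) * (k * e) - (2 * π * (e - 1)) * (k * (2 * k * e))) / (k * e) ^ 2)
      t := by
    have hnum : HasDerivAt (fun s => 2 * π * (Real.exp (2 * s * k) - 1)) (2 * π * (2 * k * e)) t :=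
      hu1.const_mul (2 * π)
    have hden : HasDerivAt (fun s => k * Real.exp (2 * s * k)) (k * (2 * k * e)) t :=
      hu.const_mul k
    have h := hnum.div hden (by positivity)
    simp only [← he] at h
    exact h
  have hBtne : (2 * π * (Real.exp (2 * t * k) - 1)) / (k * Real.exp (2 * t * k)) ≠ 0 := by
    rw [← he]; exact hBne
  have hAd : HasDerivAt
      (fun s => ((2 * π * (Real.exp (2 * s * k) - 1)) / (k * Real.exp (2 * s * k))) ^ (-(n : ℝ) / 2))
      ((-(n : ℝ) / 2) * ((2 * π * (e - 1)) / (k * e)) ^ (-(n : ℝ) / 2 - 1) *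
        (((2 * π * (2 * k * e)) * (k * e) - (2 * π * (e - 1)) * (k * (2 * k * e))) / (k * e) ^ 2))
      t := by
    have h := hB.rpow_const (p := -(n : ℝ) / 2) (Or.inl hBtne)
    simp only [← he] at h
    convert h using 1
    ring
  have hv : HasDerivAt (fun s => -k * C / (2 * (Real.exp (2 * s * k) - 1)))
      ((0 * (2 * (e - 1)) - (-k * C) * (2 * (2 * k * e))) / (2 * (e - 1)) ^ 2) t := by
    have hden : HasDerivAt (fun s => 2 * (Real.exp (2 * s * k) - 1)) (2 * (2 * k * e)) t :=
      hu1.const_mul 2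
    have hdne : 2 * (Real.exp (2 * t * k) - 1) ≠ 0 := by
      rw [← he]; exact mul_ne_zero two_ne_zero hgne
    have h := (hasDerivAt_const t (-k * C)).div hden hdne
    simp only [← he] at h
    exact h
  have hEd := hv.exp
  have hD : HasDerivAt (fun s =>
      ((2 * π * (Real.exp (2 * s * k) - 1)) / (k * Real.exp (2 * s * k))) ^ (-(n : ℝ) / 2) *
        Real.exp (-k * C / (2 * (Real.exp (2 * s * k) - 1)))) _ t := hAd.mul hEd
  have hfun : (fun s => ρ s x) = fun s =>
      ((2 * π * (Real.exp (2 * s * k) - 1)) / (k * Real.exp (2 * s * k))) ^ (-(n : ℝ) / 2) *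
        Real.exp (-k * ‖x‖ ^ 2 / (2 * (Real.exp (2 * s * k) - 1))) := by
    funext s; exact hρ s x
  rw [hfun]
  rw [hD.deriv]
  rw [hρt, gauss_lap, gauss_inner_gradient]
  have hEeq : Real.exp (-k * C / (2 * (e - 1))) = Real.exp (-c * C) := by
    congr 1; rw [hc]; ring
  have hrpow : ((2 * π * (e - 1)) / (k * e)) ^ (-(n : ℝ) / 2 - 1)
      = A / ((2 * π * (e - 1)) / (k * e)) := by
    rw [hA, Real.rpow_sub_one hBne]
  rw [hEeq, hrpow]
  simp only [gauss]
  have hπ : π ≠ 0 := Real.pi_ne_zero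
  simp only [← he, ← hA]
  rw [hc, hCdef]
  field_simp
  ring
end

section
/- For k > 0 and the solution ρ_t(x) = ((2π(e^{2tk}-1))/(k e^{2tk}))^{-n/2} exp(-k|x|²/(2(e^{2tk}-1))) of ∂_t ρ_t = Δρ_t - k⟨x,∇ρ_t⟩ on ℝⁿ, one has the identity Δ log ρ_t - (k n)/2 = -(n k / 2) coth(k t) for all t > 0 and x ∈ ℝⁿ. -/
open Real Set Filter

noncomputable def coth (x : ℝ) : ℝ := Real.cosh x / Real.sinh x

lemma fderiv_quad (n : ℕ) (a C : ℝ) (y : EuclideanSpace ℝ (Fin n)) (v : EuclideanSpace ℝ (Fin n)) :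
    fderiv ℝ (fun y : EuclideanSpace ℝ (Fin n) => C - a * ‖y‖ ^ 2) y v
      = -(2 * a) * inner ℝ y v := by
  have h1 : HasFDerivAt (fun y : EuclideanSpace ℝ (Fin n) => (inner ℝ y y : ℝ))
      ((fderivInnerCLM ℝ (y, y)).comp ((ContinuousLinearMap.id ℝ _).prod
        (ContinuousLinearMap.id ℝ _))) y :=
    (hasFDerivAt_id y).inner ℝ (hasFDerivAt_id y)
  have h2 : HasFDerivAt (fun y : EuclideanSpace ℝ (Fin n) => C - a * ‖y‖ ^ 2)
      (-(a • ((fderivInnerCLM ℝ (y, y)).comp ((ContinuousLinearMap.id ℝ _).prod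
        (ContinuousLinearMap.id ℝ _))))) y := by
    have : (fun y : EuclideanSpace ℝ (Fin n) => C - a * ‖y‖ ^ 2)
        = fun y : EuclideanSpace ℝ (Fin n) => C - a * (inner ℝ y y : ℝ) := by
      funext z; rw [real_inner_self_eq_norm_sq]
    rw [this]
    have h := (hasFDerivAt_const C y).sub (h1.const_mul a); rw [zero_sub] at h; exact h
  rw [h2.fderiv]
  simp [real_inner_comm y v]
  ring

lemma lap_quad (n : ℕ) (a C : ℝ) (x : EuclideanSpace ℝ (Fin n)) :
    lap n (fun y => C - a * ‖y‖ ^ 2) x = -(2 * a) * n := by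
  unfold lap
  have : ∀ i : Fin n,
      fderiv ℝ (fun y => fderiv ℝ (fun y : EuclideanSpace ℝ (Fin n) => C - a * ‖y‖ ^ 2) y
        (EuclideanSpace.single i 1)) x (EuclideanSpace.single i 1) = -(2 * a) := by
    intro i
    have heq : (fun y => fderiv ℝ (fun y : EuclideanSpace ℝ (Fin n) => C - a * ‖y‖ ^ 2) y
        (EuclideanSpace.single i 1))
        = fun y : EuclideanSpace ℝ (Fin n) =>
            ((-(2 * a)) • (EuclideanSpace.proj (𝕜 := ℝ) i)) y := by
      funext y
      rw [fderiv_quad]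
      simp [EuclideanSpace.inner_single_right]
    rw [heq, ContinuousLinearMap.fderiv]
    simp
  rw [Finset.sum_congr rfl (fun i _ => this i)]
  simp [mul_comm]

theorem stmt1 (n : ℕ) (k : ℝ) (hk : 0 < k)
    (ρ : ℝ → EuclideanSpace ℝ (Fin n) → ℝ)
    (hρ : ∀ t x, ρ t x =
      ((2 * π * (Real.exp (2 * t * k) - 1)) / (k * Real.exp (2 * t * k))) ^ (-(n : ℝ) / 2) *
        Real.exp (-k * ‖x‖ ^ 2 / (2 * (Real.exp (2 * t * k) - 1)))) :
    ∀ t, 0 < t → ∀ x,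
      lap n (fun y => Real.log (ρ t y)) x - k * n / 2 = -(n * k / 2) * coth (k * t) := by
  intro t ht x
  set u : ℝ := Real.exp (k * t) with hu
  have hu1 : 1 < u := by
    rw [hu, show (1:ℝ) = Real.exp 0 by simp]
    exact Real.exp_lt_exp.mpr (by positivity)
  have hE : Real.exp (2 * t * k) = u ^ 2 := by
    rw [hu, ← Real.exp_nat_mul]; ring_nf
  have hE1 : (0:ℝ) < u ^ 2 - 1 := by nlinarith
  set c : ℝ := ((2 * π * (Real.exp (2 * t * k) - 1)) / (k * Real.exp (2 * t * k))) ^ (-(n : ℝ) / 2)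
    with hc
  have hcpos : 0 < c := by
    apply Real.rpow_pos_of_pos
    rw [hE]
    have : 0 < π := Real.pi_pos
    positivity
  set a : ℝ := k / (2 * (u ^ 2 - 1)) with ha
  have hlog : (fun y => Real.log (ρ t y))
      = fun y : EuclideanSpace ℝ (Fin n) => Real.log c - a * ‖y‖ ^ 2 := by
    funext y
    rw [hρ, ← hc, Real.log_mul (ne_of_gt hcpos) (Real.exp_ne_zero _), Real.log_exp, hE, ha]
    field_simp
    ring
  have hinv : Real.exp (-(k * t)) = u⁻¹ := by rw [Real.exp_neg, hu]
  rw [hlog, lap_quad, ha, coth, Real.cosh_eq, Real.sinh_eq, hinv, ← hu]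
  have hune : u ≠ 0 := by positivity
  have hsinh : u - u⁻¹ ≠ 0 := by
    have : u⁻¹ < 1 := inv_lt_one_of_one_lt₀ hu1
    intro h; nlinarith
  have h3 : (u : ℝ) ^ 2 - 1 ≠ 0 := ne_of_gt hE1
  rw [div_div_div_eq, show u + u⁻¹ = (u ^ 2 + 1) / u by field_simp,
    show u - u⁻¹ = (u ^ 2 - 1) / u by field_simp]
  field_simp
  ring
end

section
/- On ℝⁿ with U₁ ≡ 0 and U₂(x) = -(k²/2)|x|², the cost function c_{0,t}(0,x) = inf_{γ(0)=0, γ(t)=x} ∫₀ᵗ (1/2)|γ'(s)|² - U₂(γ(s)) ds satisfies Hess_x c_{0,t}(0,x) = k coth(kt) · I and Δ_x c_{0,t}(0,x) = k n coth(kt) for all t > 0 and x ∈ ℝⁿ. -/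
open Real Set Filter

section Aux

variable {E : Type*} [NormedAddCommGroup E] [InnerProductSpace ℝ E]

lemma hd_g0 (k t : ℝ) (x : E) (s : ℝ) :
    HasDerivAt (fun u => (Real.sinh (k*u)/Real.sinh (k*t)) • x)
      ((k * Real.cosh (k*s)/Real.sinh (k*t)) • x) s := by
  have h1 : HasDerivAt (fun u : ℝ => Real.sinh (k*u)) (Real.cosh (k*s) * k) s :=
    (Real.hasDerivAt_sinh (k*s)).comp s (by simpa using (hasDerivAt_id s).const_mul k)
  have := (h1.div_const (Real.sinh (k*t))).smul_const x
  convert this using 2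
  ring

lemma hd_d0 (k t : ℝ) (x : E) (s : ℝ) :
    HasDerivAt (fun u => (k * Real.cosh (k*u)/Real.sinh (k*t)) • x)
      ((k^2 * Real.sinh (k*s)/Real.sinh (k*t)) • x) s := by
  have h1 : HasDerivAt (fun u : ℝ => Real.cosh (k*u)) (Real.sinh (k*s) * k) s :=
    (Real.hasDerivAt_cosh (k*s)).comp s (by simpa using (hasDerivAt_id s).const_mul k)
  have := ((h1.const_mul k).div_const (Real.sinh (k*t))).smul_const x
  convert this using 2
  ring

lemma action_gamma0 (k t : ℝ) (hk : 0 < k) (ht : 0 < t) (x : E) :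
    ∫ s in (0:ℝ)..t, ((1/2) * ‖(k * Real.cosh (k*s)/Real.sinh (k*t)) • x‖^2
        + (k^2/2) * ‖(Real.sinh (k*s)/Real.sinh (k*t)) • x‖^2)
      = (k/2) * (Real.cosh (k*t)/Real.sinh (k*t)) * ‖x‖^2 := by
  set S := Real.sinh (k*t) with hS
  have hS0 : 0 < S := Real.sinh_pos_iff.mpr (by positivity)
  set f : ℝ → ℝ := fun s => (1/2) * ‖(k * Real.cosh (k*s)/S) • x‖^2
        + (k^2/2) * ‖(Real.sinh (k*s)/S) • x‖^2 with hf
  have hfc : Continuous f := by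
    apply Continuous.add
    · exact (continuous_const.mul ((((continuous_const.mul
        (Real.continuous_cosh.comp (continuous_const.mul continuous_id))).div_const S).smul
        continuous_const).norm.pow 2))
    · exact (continuous_const.mul ((((Real.continuous_sinh.comp
        (continuous_const.mul continuous_id)).div_const S).smul continuous_const).norm.pow 2))
  set Ψ : ℝ → ℝ := fun u => (k*‖x‖^2/(2*S^2)) * (Real.sinh (k*u) * Real.cosh (k*u)) with hΨ
  have hΨd : ∀ u ∈ Set.uIcc (0:ℝ) t, HasDerivAt Ψ (f u) u := by
    intro u _
    have h1 : HasDerivAt (fun u : ℝ => Real.sinh (k*u)) (Real.cosh (k*u) * k) u :=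
      (Real.hasDerivAt_sinh (k*u)).comp u (by simpa using (hasDerivAt_id u).const_mul k)
    have h2 : HasDerivAt (fun u : ℝ => Real.cosh (k*u)) (Real.sinh (k*u) * k) u :=
      (Real.hasDerivAt_cosh (k*u)).comp u (by simpa using (hasDerivAt_id u).const_mul k)
    have := ((h1.mul h2).const_mul (k*‖x‖^2/(2*S^2)))
    refine this.congr_deriv ?_
    simp only [hf, norm_smul, Real.norm_eq_abs, mul_pow, sq_abs]
    ring
  have := intervalIntegral.integral_eq_sub_of_hasDerivAt hΨd (hfc.intervalIntegrable 0 t)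
  rw [hf] at this
  rw [this]
  simp only [hΨ, mul_zero, Real.sinh_zero, zero_mul, sub_zero, ← hS]
  field_simp

lemma action_lb (k t : ℝ) (hk : 0 < k) (ht : 0 < t) (γ : ℝ → E)
    (hγ : ContDiff ℝ 1 γ) (h0 : γ 0 = 0) :
    (k/2) * (Real.cosh (k*t)/Real.sinh (k*t)) * ‖γ t‖^2
      ≤ ∫ s in (0:ℝ)..t, ((1/2) * ‖deriv γ s‖^2 + (k^2/2) * ‖γ s‖^2) := by
  set S := Real.sinh (k*t) with hS
  have hS0 : 0 < S := Real.sinh_pos_iff.mpr (by positivity)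
  set x := γ t with hx
  set g0 : ℝ → E := fun u => (Real.sinh (k*u)/S) • x with hg0
  set d0 : ℝ → E := fun u => (k * Real.cosh (k*u)/S) • x with hd0
  have hγd : Continuous (deriv γ) := hγ.continuous_deriv le_rfl
  have hγc : Continuous γ := hγ.continuous
  have hγder : ∀ s, HasDerivAt γ (deriv γ s) s := fun s =>
    (hγ.differentiable one_ne_zero s).hasDerivAt
  have hg0c : Continuous g0 := ((Real.continuous_sinh.comp
      (continuous_const.mul continuous_id)).div_const S).smul continuous_const
  have hd0c : Continuous d0 := ((continuous_const.mul (Real.continuous_cosh.comp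
      (continuous_const.mul continuous_id))).div_const S).smul continuous_const
  set A : ℝ → ℝ := fun s => (1/2) * ‖d0 s‖^2 + (k^2/2) * ‖g0 s‖^2 with hA
  set B : ℝ → ℝ := fun s =>
    inner ℝ (d0 s) (deriv γ s - d0 s) + k^2 * inner ℝ (g0 s) (γ s - g0 s) with hB
  set C : ℝ → ℝ := fun s => (1/2) * ‖deriv γ s - d0 s‖^2 + (k^2/2) * ‖γ s - g0 s‖^2 with hC
  have hAc : Continuous A := (continuous_const.mul (hd0c.norm.pow 2)).add
    (continuous_const.mul (hg0c.norm.pow 2))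
  have hBc : Continuous B := (hd0c.inner (hγd.sub hd0c)).add
    (continuous_const.mul (hg0c.inner (hγc.sub hg0c)))
  have hCc : Continuous C := (continuous_const.mul ((hγd.sub hd0c).norm.pow 2)).add
    (continuous_const.mul ((hγc.sub hg0c).norm.pow 2))
  have hsplit : ∀ s, (1/2) * ‖deriv γ s‖^2 + (k^2/2) * ‖γ s‖^2 = A s + B s + C s := by
    intro s
    have e1 : ‖deriv γ s - d0 s‖^2
        = ‖deriv γ s‖^2 - 2 * inner ℝ (deriv γ s) (d0 s) + ‖d0 s‖^2 :=
      norm_sub_sq_real _ _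
    have e2 : ‖γ s - g0 s‖^2 = ‖γ s‖^2 - 2 * inner ℝ (γ s) (g0 s) + ‖g0 s‖^2 :=
      norm_sub_sq_real _ _
    have e3 : (inner ℝ (d0 s) (deriv γ s - d0 s) : ℝ)
        = inner ℝ (deriv γ s) (d0 s) - ‖d0 s‖^2 := by
      rw [inner_sub_right, real_inner_comm, real_inner_self_eq_norm_sq]
    have e4 : (inner ℝ (g0 s) (γ s - g0 s) : ℝ) = inner ℝ (γ s) (g0 s) - ‖g0 s‖^2 := by
      rw [inner_sub_right, real_inner_comm, real_inner_self_eq_norm_sq]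
    simp only [hA, hB, hC, e3, e4]
    rw [e1, e2]; ring
  have hint : (∫ s in (0:ℝ)..t, ((1/2) * ‖deriv γ s‖^2 + (k^2/2) * ‖γ s‖^2))
      = (∫ s in (0:ℝ)..t, A s) + (∫ s in (0:ℝ)..t, B s) + (∫ s in (0:ℝ)..t, C s) := by
    rw [← intervalIntegral.integral_add (hAc.intervalIntegrable 0 t) (hBc.intervalIntegrable 0 t),
      ← intervalIntegral.integral_add (f := fun s => A s + B s) ((hAc.add hBc).intervalIntegrable 0 t)
        (hCc.intervalIntegrable 0 t)]
    exact intervalIntegral.integral_congr (fun s _ => hsplit s)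
  have hIA : (∫ s in (0:ℝ)..t, A s) = (k/2) * (Real.cosh (k*t)/S) * ‖x‖^2 :=
    action_gamma0 k t hk ht x
  have hIB : (∫ s in (0:ℝ)..t, B s) = 0 := by
    set G : ℝ → ℝ := fun s => inner ℝ (d0 s) (γ s - g0 s) with hG
    have hGd : ∀ s ∈ Set.uIcc (0:ℝ) t, HasDerivAt G (B s) s := by
      intro s _
      have h1 := (hd_d0 k t x s).inner ℝ ((hγder s).sub (hd_g0 k t x s))
      have e5 : B s = inner ℝ (d0 s) (deriv γ s - d0 s)
          + inner ℝ ((k^2 * Real.sinh (k*s)/S) • x) (γ s - g0 s) := by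
        simp only [hB, hd0, hg0, real_inner_smul_left]
        ring
      rw [e5]
      exact h1
    have := intervalIntegral.integral_eq_sub_of_hasDerivAt hGd (hBc.intervalIntegrable 0 t)
    rw [this]
    have hg0t : g0 t = x := by
      simp only [hg0, ← hS, div_self hS0.ne', one_smul]
    have hg00 : g0 0 = 0 := by
      simp only [hg0, mul_zero, Real.sinh_zero, zero_div, zero_smul]
    simp [hG, hg0t, hg00, h0, ← hx]
  have hIC : 0 ≤ (∫ s in (0:ℝ)..t, C s) :=
    intervalIntegral.integral_nonneg ht.le (fun s _ => by positivity)
  rw [hint, hIA, hIB]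
  linarith

lemma cost_eq (k t : ℝ) (hk : 0 < k) (ht : 0 < t) (x : E) :
    sInf { a : ℝ | ∃ γ : ℝ → E, ContDiff ℝ 1 γ ∧ γ 0 = 0 ∧ γ t = x ∧
      a = ∫ s in (0:ℝ)..t, ((1/2) * ‖deriv γ s‖^2 + (k^2/2) * ‖γ s‖^2) }
    = (k/2) * (Real.cosh (k*t)/Real.sinh (k*t)) * ‖x‖^2 := by
  set S := Real.sinh (k*t) with hS
  have hS0 : 0 < S := Real.sinh_pos_iff.mpr (by positivity)
  set L := (k/2) * (Real.cosh (k*t)/S) * ‖x‖^2 with hL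
  set γ₀ : ℝ → E := fun u => (Real.sinh (k*u)/S) • x with hγ₀
  have hcd : ContDiff ℝ 1 γ₀ :=
    ((Real.contDiff_sinh.comp (contDiff_const.mul contDiff_id)).div_const S).smul contDiff_const
  have hder : deriv γ₀ = fun s => (k * Real.cosh (k*s)/S) • x :=
    funext fun s => (hd_g0 k t x s).deriv
  have hmem : L ∈ { a : ℝ | ∃ γ : ℝ → E, ContDiff ℝ 1 γ ∧ γ 0 = 0 ∧ γ t = x ∧
      a = ∫ s in (0:ℝ)..t, ((1/2) * ‖deriv γ s‖^2 + (k^2/2) * ‖γ s‖^2) } := by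
    refine ⟨γ₀, hcd, ?_, ?_, ?_⟩
    · simp only [hγ₀, mul_zero, Real.sinh_zero, zero_div, zero_smul]
    · simp only [hγ₀, ← hS, div_self hS0.ne', one_smul]
    · rw [hder, hγ₀, hL]
      exact (action_gamma0 k t hk ht x).symm
  have hlb : ∀ a ∈ { a : ℝ | ∃ γ : ℝ → E, ContDiff ℝ 1 γ ∧ γ 0 = 0 ∧ γ t = x ∧
      a = ∫ s in (0:ℝ)..t, ((1/2) * ‖deriv γ s‖^2 + (k^2/2) * ‖γ s‖^2) }, L ≤ a := by
    rintro a ⟨γ, h1, h2, h3, rfl⟩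
    have := action_lb k t hk ht γ h1 h2
    rwa [h3, ← hS, ← hL] at this
  exact le_antisymm (csInf_le ⟨L, hlb⟩ hmem) (le_csInf ⟨L, hmem⟩ hlb)

lemma second_deriv (a : ℝ) (x v w : E) :
    fderiv ℝ (fun y => fderiv ℝ (fun z : E => a * ‖z‖^2) y v) x w = 2 * a * inner ℝ v w := by
  have h1 : ∀ y : E, HasFDerivAt (fun z : E => a * ‖z‖^2) ((2*a) • innerSL ℝ y) y := by
    intro y
    have := ((hasStrictFDerivAt_norm_sq y).hasFDerivAt.const_mul a : HasFDerivAt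
      (fun z : E => a * ‖z‖^2) (a • (2 • innerSL ℝ y)) y)
    refine this.congr_fderiv ?_
    ext z
    simp only [ContinuousLinearMap.smul_apply, innerSL_apply_apply, smul_eq_mul,
      ContinuousLinearMap.coe_smul', Pi.smul_apply, nsmul_eq_mul, Nat.cast_ofNat]
    ring
  have h2 : (fun y : E => fderiv ℝ (fun z : E => a * ‖z‖^2) y v)
      = fun y : E => ((2*a) • (innerSL ℝ v : E →L[ℝ] ℝ)) y := by
    funext y
    rw [(h1 y).fderiv]
    simp only [ContinuousLinearMap.smul_apply, innerSL_apply_apply, smul_eq_mul]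
    rw [real_inner_comm]
  rw [h2, ContinuousLinearMap.fderiv]
  simp only [ContinuousLinearMap.smul_apply, innerSL_apply_apply, smul_eq_mul]
end Aux

theorem stmt10 (n : ℕ) (k : ℝ) (hk : 0 < k)
    (U₂ : EuclideanSpace ℝ (Fin n) → ℝ) (hU₂ : ∀ x, U₂ x = -(k ^ 2 / 2) * ‖x‖ ^ 2)
    (c : ℝ → EuclideanSpace ℝ (Fin n) → ℝ)
    (hc : ∀ t x, c t x = sInf { a : ℝ | ∃ γ : ℝ → EuclideanSpace ℝ (Fin n),
      ContDiff ℝ 1 γ ∧ γ 0 = 0 ∧ γ t = x ∧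
      a = ∫ s in (0 : ℝ)..t, ((1 / 2) * ‖deriv γ s‖ ^ 2 - U₂ (γ s)) }) :
    ∀ t, 0 < t → ∀ x,
      (∀ v w : EuclideanSpace ℝ (Fin n),
        fderiv ℝ (fun y => fderiv ℝ (c t) y v) x w = k * coth (k * t) * inner ℝ v w) ∧
      lap n (c t) x = k * n * coth (k * t) := by
  intro t ht x
  set a : ℝ := (k/2) * (Real.cosh (k*t)/Real.sinh (k*t)) with ha
  have hval : c t = fun y : EuclideanSpace ℝ (Fin n) => a * ‖y‖^2 := by
    funext y
    rw [hc, ← cost_eq k t hk ht y]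
    congr 1
    ext b
    constructor <;> rintro ⟨γ, h1, h2, h3, rfl⟩ <;>
      exact ⟨γ, h1, h2, h3, intervalIntegral.integral_congr fun s _ => by rw [hU₂]; ring⟩
  have hcoth : k * coth (k*t) = 2 * a := by rw [coth, ha]; ring
  have key : ∀ v w : EuclideanSpace ℝ (Fin n),
      fderiv ℝ (fun y => fderiv ℝ (c t) y v) x w = k * coth (k * t) * inner ℝ v w := by
    intro v w
    rw [hval, hcoth]
    exact second_deriv a x v w
  refine ⟨key, ?_⟩
  rw [lap]
  have hterm : ∀ i : Fin n,
      fderiv ℝ (fun y => fderiv ℝ (c t) y (EuclideanSpace.single i 1)) x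
        (EuclideanSpace.single i 1) = k * coth (k*t) := by
    intro i
    rw [key (EuclideanSpace.single i 1) (EuclideanSpace.single i 1)]
    have : (inner ℝ (EuclideanSpace.single i (1:ℝ)) (EuclideanSpace.single i (1:ℝ)) : ℝ) = 1 := by
      rw [real_inner_self_eq_norm_sq, EuclideanSpace.norm_single]
      norm_num
    rw [this, mul_one]
  simp only [hterm]
  rw [Finset.sum_const, Finset.card_univ, Fintype.card_fin, nsmul_eq_mul]
  ring
end

section
/- Let k > 0 and α ≥ 1. Define a₂(t) = (e^{kt} - e^{-kt})² and a₄(t) = -(nα^{3/2}k/2) coth(kt/√α) · a₂(t). Then the ratio a₄/a₂ satisfies the Riccati equation d/dt(a₄/a₂) - (2/(α²n))(a₄/a₂)² + (αnk²)/2 = 0, and moreover ȧ₂/a₂ + 4a₄/(nα² a₂) = 2k coth(kt) - (2k/√α) coth(kt/√α) ≥ 0 for all t > 0. -/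
open Real Set Filter Topology

lemma coth_hasDerivAt (x : ℝ) (hx : Real.sinh x ≠ 0) :
    HasDerivAt coth (1 - coth x ^ 2) x := by
  have h := (Real.hasDerivAt_cosh x).div (Real.hasDerivAt_sinh x) hx
  refine HasDerivAt.congr_deriv h ?_
  simp only [coth]
  field_simp

lemma mul_coth_mono {v u : ℝ} (hv : 0 < v) (hvu : v ≤ u) :
    v * coth v ≤ u * coth u := by
  have key : StrictMonoOn (fun x => x * Real.cosh x / Real.sinh x) (Ici v) := by
    apply strictMonoOn_of_deriv_pos (convex_Ici v)
    · apply ContinuousOn.div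
      · exact (continuous_id.mul Real.continuous_cosh).continuousOn
      · exact Real.continuous_sinh.continuousOn
      · intro x hx
        exact ne_of_gt (Real.sinh_pos_iff.mpr (lt_of_lt_of_le hv hx))
    · intro x hx
      rw [interior_Ici] at hx
      have hxpos : 0 < x := lt_trans hv hx
      have hs : Real.sinh x ≠ 0 := ne_of_gt (Real.sinh_pos_iff.mpr hxpos)
      have hd : HasDerivAt (fun x => x * Real.cosh x / Real.sinh x)
          (((1 * Real.cosh x + x * Real.sinh x) * Real.sinh x - x * Real.cosh x * Real.cosh x)
            / Real.sinh x ^ 2) x :=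
        ((hasDerivAt_id x).mul (Real.hasDerivAt_cosh x)).div (Real.hasDerivAt_sinh x) hs
      rw [hd.deriv]
      apply div_pos
      · have h1 : 2 * x < Real.sinh (2 * x) := Real.self_lt_sinh_iff.mpr (by linarith)
        rw [Real.sinh_two_mul] at h1
        nlinarith [Real.cosh_sq x, Real.sinh_pos_iff.mpr hxpos]
      · positivity
  have h2 := key.monotoneOn self_mem_Ici (mem_Ici.mpr hvu) hvu
  simpa [coth, mul_div_assoc] using h2

theorem stmt13 (n : ℕ) (hn : 1 ≤ n) (k α : ℝ) (hk : 0 < k) (hα : 1 ≤ α)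
    (a2 a4 : ℝ → ℝ)
    (ha2 : ∀ t, a2 t = (Real.exp (k * t) - Real.exp (-(k * t))) ^ 2)
    (ha4 : ∀ t, a4 t = -((n : ℝ) * α ^ ((3 : ℝ) / 2) * k / 2) * coth (k * t / Real.sqrt α) * a2 t) :
    ∀ t, 0 < t →
      HasDerivAt (fun s => a4 s / a2 s)
        ((2 / (α ^ 2 * n)) * (a4 t / a2 t) ^ 2 - α * n * k ^ 2 / 2) t ∧
      deriv a2 t / a2 t + 4 * a4 t / (n * α ^ 2 * a2 t) =
        2 * k * coth (k * t) - (2 * k / Real.sqrt α) * coth (k * t / Real.sqrt α) ∧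
      0 ≤ 2 * k * coth (k * t) - (2 * k / Real.sqrt α) * coth (k * t / Real.sqrt α) := by
  intro t ht
  have hα0 : (0:ℝ) < α := lt_of_lt_of_le one_pos hα
  set s : ℝ := Real.sqrt α with hs_def
  have hs1 : 1 ≤ s := by
    rw [hs_def, show (1:ℝ) = Real.sqrt 1 by simp]
    exact Real.sqrt_le_sqrt hα
  have hs0 : 0 < s := lt_of_lt_of_le one_pos hs1
  have hs2 : s ^ 2 = α := Real.sq_sqrt hα0.le
  have hn0 : (n:ℝ) ≠ 0 := Nat.cast_ne_zero.mpr (by omega)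
  have hα32 : α ^ ((3:ℝ)/2) = α * s := by
    rw [show (3:ℝ)/2 = 1 + 1/2 by norm_num, Real.rpow_add hα0, Real.rpow_one,
      ← Real.sqrt_eq_rpow]
  -- positivity of a2 on positive reals
  have ha2pos : ∀ x : ℝ, 0 < x → 0 < a2 x := by
    intro x hx
    rw [ha2]
    have h' : 0 < Real.exp (k*x) - Real.exp (-(k*x)) :=
      sub_pos.mpr (Real.exp_lt_exp.mpr (by nlinarith))
    positivity
  have ht2 : 0 < a2 t := ha2pos t ht
  have hsinh : ∀ x : ℝ, 0 < x → Real.sinh x ≠ 0 := fun x hx =>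
    ne_of_gt (Real.sinh_pos_iff.mpr hx)
  have hkts : 0 < k * t / s := by positivity
  have hdivratio : ∀ x : ℝ, 0 < x →
      a4 x / a2 x = -((n : ℝ) * α ^ ((3 : ℝ) / 2) * k / 2) * coth (k * x / s) := by
    intro x hx
    rw [ha4, mul_div_assoc, div_self (ha2pos x hx).ne', mul_one]
  refine ⟨?_, ?_, ?_⟩
  · -- Riccati equation
    have hinner : HasDerivAt (fun x : ℝ => k * x / s) (k / s) t := by
      simpa using ((hasDerivAt_id t).const_mul k).div_const s
    have hcoth : HasDerivAt (fun x : ℝ => coth (k * x / s))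
        ((1 - coth (k * t / s) ^ 2) * (k / s)) t :=
      (coth_hasDerivAt _ (hsinh _ hkts)).comp t (h := fun x : ℝ => k * x / s) hinner
    have hg : HasDerivAt (fun x : ℝ => -((n : ℝ) * α ^ ((3 : ℝ) / 2) * k / 2) * coth (k * x / s))
        (-((n : ℝ) * α ^ ((3 : ℝ) / 2) * k / 2) * ((1 - coth (k * t / s) ^ 2) * (k / s))) t :=
      hcoth.const_mul _
    have heq : (fun x => a4 x / a2 x) =ᶠ[𝓝 t]
        (fun x : ℝ => -((n : ℝ) * α ^ ((3 : ℝ) / 2) * k / 2) * coth (k * x / s)) := by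
      filter_upwards [Ioi_mem_nhds ht] with x hx
      exact hdivratio x hx
    have hmain := hg.congr_of_eventuallyEq heq
    refine hmain.congr_deriv ?_
    rw [hdivratio t ht, hα32, ← hs2]
    field_simp
    ring
  · -- the identity
    have hE : HasDerivAt a2
        (2 * (Real.exp (k*t) - Real.exp (-(k*t))) ^ 1 *
          (Real.exp (k*t) * k - Real.exp (-(k*t)) * (-k))) t := by
      have h1 : HasDerivAt (fun x : ℝ => Real.exp (k * x)) (Real.exp (k*t) * k) t :=
        (Real.hasDerivAt_exp (k*t)).comp t (by simpa using (hasDerivAt_id t).const_mul k)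
      have h2 : HasDerivAt (fun x : ℝ => Real.exp (-(k * x))) (Real.exp (-(k*t)) * (-k)) t :=
        (Real.hasDerivAt_exp (-(k*t))).comp t (h := fun x : ℝ => -(k * x))
          (by exact ((hasDerivAt_id t).const_mul k).neg.congr_deriv (by simp))
      have := ((h1.sub h2).pow 2)
      have hfun : a2 = fun x => (Real.exp (k*x) - Real.exp (-(k*x))) ^ 2 := funext ha2
      rw [hfun]
      exact this.congr_deriv (by simp only [Pi.sub_apply]; ring)
    rw [hE.deriv, ha4 t, ha2 t, hα32]
    have hshne : Real.sinh (k*t) ≠ 0 := hsinh _ (by positivity)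
    have hshne2 : Real.sinh (k*t/s) ≠ 0 := hsinh _ hkts
    rw [← Real.cosh_add_sinh, ← Real.cosh_sub_sinh, coth, coth, ← hs2]
    set A := Real.cosh (k*t) with hA
    set B := Real.sinh (k*t) with hB
    set C := Real.cosh (k*t/s) with hC
    set D := Real.sinh (k*t/s) with hD
    field_simp
    have hB' : B * B⁻¹ = 1 := mul_inv_cancel₀ hshne
    linear_combination (A*s*D*4 - B*C*4) * hB'
  · -- the inequality
    have hle : k * t / s ≤ k * t := by
      rw [div_le_iff₀ hs0]
      have hkt : 0 < k * t := mul_pos hk ht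
      nlinarith
    have hmono := mul_coth_mono hkts hle
    have e1 : 2 / t * (k * t / s * coth (k*t/s)) = 2 * k / s * coth (k*t/s) := by
      field_simp
    have e2 : 2 / t * (k * t * coth (k*t)) = 2 * k * coth (k*t) := by
      field_simp
    have := mul_le_mul_of_nonneg_left hmono (by positivity : (0:ℝ) ≤ 2 / t)
    rw [e1, e2] at this
    linarith
end

section
/- Let A : [t₀,t₁] → GL_n(ℝ) be C¹ with det A(t) > 0, and suppose tr(A(t)^{-1}A'(t)) ≤ f(t) for all t, where f is continuous. Then det A(t₁)/det A(t₀) ≤ exp(∫_{t₀}^{t₁} f(t) dt). In particular, if f(t) = (1/c)·a_K(t) with c > 0, then det A(t₁)/det A(t₀) ≤ (b_K(t₁)/b_K(t₀))^{1/c}, where b_K' = a_K b_K. -/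
open Real Set Filter

-- derivative of det along a C¹ matrix path
lemma my_hasDerivAt_det {n : ℕ} (M : ℝ → Matrix (Fin n) (Fin n) ℝ)
    (N : Matrix (Fin n) (Fin n) ℝ) (t : ℝ)
    (h : ∀ i j, HasDerivAt (fun s => M s i j) (N i j) t) :
    HasDerivAt (fun s => (M s).det) (Matrix.trace ((M t).adjugate * N)) t := by
  have key : ∀ σ : Equiv.Perm (Fin n),
      HasDerivAt (fun s => ∏ i, M s (σ i) i)
        (∑ i, (∏ j ∈ Finset.univ.erase i, M t (σ j) j) * N (σ i) i) t := by
    intro σ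
    simpa [smul_eq_mul] using
      HasDerivAt.fun_finsetProd (u := Finset.univ) (f := fun i s => M s (σ i) i)
        (f' := fun i => N (σ i) i) (fun i _ => h (σ i) i)
  have hd : HasDerivAt (fun s => (M s).det)
      (∑ σ : Equiv.Perm (Fin n), (Equiv.Perm.sign σ : ℝ) *
        ∑ i, (∏ j ∈ Finset.univ.erase i, M t (σ j) j) * N (σ i) i) t := by
    simp_rw [Matrix.det_apply']
    exact HasDerivAt.fun_sum fun σ _ => (key σ).const_mul _
  convert hd using 1
  -- identify trace (adjugate M * N) with the Leibniz derivative sum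
  have step1 : ∀ i : Fin n, ((M t).updateCol i fun r => N r i).det
      = ∑ σ : Equiv.Perm (Fin n), (Equiv.Perm.sign σ : ℝ) *
          (N (σ i) i * ∏ j ∈ Finset.univ.erase i, M t (σ j) j) := by
    intro i
    rw [Matrix.det_apply']
    refine Finset.sum_congr rfl fun σ _ => ?_
    congr 1
    rw [← Finset.mul_prod_erase _ _ (Finset.mem_univ i)]
    congr 1
    · simp [Matrix.updateCol_apply]
    · exact Finset.prod_congr rfl fun j hj =>
        by simp [Matrix.updateCol_apply, (Finset.ne_of_mem_erase hj)]
  have step2 : Matrix.trace ((M t).adjugate * N)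
      = ∑ i : Fin n, ((M t).updateCol i fun r => N r i).det := by
    simp only [Matrix.trace, Matrix.diag, Matrix.mul_apply]
    refine Finset.sum_congr rfl fun i _ => ?_
    have := Matrix.cramer_eq_adjugate_mulVec (M t) (fun r => N r i)
    have h2 : (M t).cramer (fun r => N r i) i = ((M t).adjugate.mulVec fun r => N r i) i := by
      rw [this]
    rw [Matrix.cramer_apply] at h2
    simp only [Matrix.mulVec, dotProduct] at h2
    exact h2.symm
  rw [step2]
  simp_rw [step1, Finset.mul_sum]
  rw [Finset.sum_comm]
  exact Finset.sum_congr rfl fun σ _ => Finset.sum_congr rfl fun i _ => by ring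

noncomputable def aK (K t : ℝ) : ℝ :=
  if 0 < K then Real.sqrt K * Real.cot (Real.sqrt K * t)
  else if K = 0 then 1 / t
  else Real.sqrt (-K) * coth (Real.sqrt (-K) * t)

noncomputable def bK (K t : ℝ) : ℝ :=
  if 0 < K then Real.sin (Real.sqrt K * t) / Real.sqrt K
  else if K = 0 then t
  else Real.sinh (Real.sqrt (-K) * t) / Real.sqrt (-K)

lemma bK_pos {K t : ℝ} (ht : 0 < t) (hK : 0 < K → Real.sqrt K * t < π) : 0 < bK K t := by
  unfold bK
  split_ifs with h1 h2
  · exact div_pos (Real.sin_pos_of_pos_of_lt_pi (mul_pos (Real.sqrt_pos.2 h1) ht) (hK h1))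
      (Real.sqrt_pos.2 h1)
  · exact ht
  · have hK' : 0 < -K := by
      rcases lt_trichotomy K 0 with h | h | h
      · linarith
      · exact absurd h h2
      · exact absurd h h1
    exact div_pos (Real.sinh_pos_iff.2 (mul_pos (Real.sqrt_pos.2 hK') ht)) (Real.sqrt_pos.2 hK')

lemma hasDerivAt_log_bK {K t : ℝ} (ht : 0 < t) (hK : 0 < K → Real.sqrt K * t < π) :
    HasDerivAt (fun s => Real.log (bK K s)) (aK K t) t := by
  rcases lt_trichotomy 0 K with h1 | h1 | h1
  · have hs : (0:ℝ) < Real.sqrt K := Real.sqrt_pos.2 h1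
    have hsin : 0 < Real.sin (Real.sqrt K * t) :=
      Real.sin_pos_of_pos_of_lt_pi (mul_pos hs ht) (hK h1)
    simp only [bK, aK, if_pos h1]
    have d1 : HasDerivAt (fun u => Real.sin (Real.sqrt K * u))
        (Real.cos (Real.sqrt K * t) * (Real.sqrt K * 1)) t :=
      (Real.hasDerivAt_sin (Real.sqrt K * t)).comp t ((hasDerivAt_id t).const_mul (Real.sqrt K))
    have d3 := (d1.div_const (Real.sqrt K)).log (ne_of_gt (div_pos hsin hs))
    convert d3 using 1
    rw [Real.cot_eq_cos_div_sin]
    field_simp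
  · subst h1
    simp only [bK, aK, lt_irrefl, if_neg (lt_irrefl (0:ℝ)), if_pos rfl]
    simpa [one_div] using Real.hasDerivAt_log ht.ne'
  · have hK' : (0:ℝ) < -K := by linarith
    have hs : (0:ℝ) < Real.sqrt (-K) := Real.sqrt_pos.2 hK'
    have hsinh : 0 < Real.sinh (Real.sqrt (-K) * t) := Real.sinh_pos_iff.2 (mul_pos hs ht)
    simp only [bK, aK, if_neg (not_lt.2 h1.le), if_neg (ne_of_lt h1)]
    have d1 : HasDerivAt (fun u => Real.sinh (Real.sqrt (-K) * u))
        (Real.cosh (Real.sqrt (-K) * t) * (Real.sqrt (-K) * 1)) t :=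
      (Real.hasDerivAt_sinh (Real.sqrt (-K) * t)).comp t
        ((hasDerivAt_id t).const_mul (Real.sqrt (-K)))
    have d3 := (d1.div_const (Real.sqrt (-K))).log (ne_of_gt (div_pos hsinh hs))
    convert d3 using 1
    rw [coth]
    field_simp

set_option maxHeartbeats 1000000 in
theorem stmt17 (n : ℕ) (t₀ t₁ : ℝ) (ht₀ : 0 < t₀) (ht : t₀ < t₁)
    (A A' : ℝ → Matrix (Fin n) (Fin n) ℝ) (f : ℝ → ℝ) (hf : Continuous f)
    (hA : ∀ t ∈ Icc t₀ t₁, ∀ i j, HasDerivAt (fun s => A s i j) (A' t i j) t)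
    (hA' : ∀ i j, ContinuousOn (fun t => A' t i j) (Icc t₀ t₁))
    (hdet : ∀ t ∈ Icc t₀ t₁, 0 < (A t).det)
    (htr : ∀ t ∈ Icc t₀ t₁, Matrix.trace ((A t)⁻¹ * A' t) ≤ f t) :
    (A t₁).det / (A t₀).det ≤ Real.exp (∫ t in t₀..t₁, f t) ∧
    (∀ K c : ℝ, 0 < c → (0 < K → t₁ < π / Real.sqrt K) →
      (∀ t ∈ Icc t₀ t₁, f t = (1 / c) * aK K t) →
      (A t₁).det / (A t₀).det ≤ (bK K t₁ / bK K t₀) ^ (1 / c)) := by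
  have ht0mem : t₀ ∈ Icc t₀ t₁ := ⟨le_refl _, ht.le⟩
  have ht1mem : t₁ ∈ Icc t₀ t₁ := ⟨ht.le, le_refl _⟩
  -- trace identity on Icc
  have htrace : ∀ t ∈ Icc t₀ t₁,
      Matrix.trace ((A t)⁻¹ * A' t) = ((A t).det)⁻¹ * Matrix.trace ((A t).adjugate * A' t) := by
    intro t htI
    rw [Matrix.inv_def, Matrix.smul_mul, Matrix.trace_smul, smul_eq_mul, Ring.inverse_eq_inv']
  -- derivative of log det
  have hld : ∀ t ∈ Icc t₀ t₁,
      HasDerivAt (fun s => Real.log (A s).det) (Matrix.trace ((A t)⁻¹ * A' t)) t := by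
    intro t htI
    have h1 := my_hasDerivAt_det A (A' t) t (hA t htI)
    have h2 := h1.log (hdet t htI).ne'
    rw [htrace t htI]
    convert h2 using 1
    rw [div_eq_inv_mul]
  -- continuity of the trace integrand
  set g : ℝ → ℝ := fun t => Matrix.trace ((A t)⁻¹ * A' t) with hg
  have cA : ContinuousOn A (Icc t₀ t₁) := by
    intro x hx
    apply continuousWithinAt_pi.2
    intro i
    apply continuousWithinAt_pi.2
    intro j
    exact ((hA x hx i j).continuousAt).continuousWithinAt
  have cA' : ContinuousOn A' (Icc t₀ t₁) := by
    intro x hx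
    apply continuousWithinAt_pi.2
    intro i
    apply continuousWithinAt_pi.2
    intro j
    exact hA' i j x hx
  have cdet : ContinuousOn (fun t => (A t).det) (Icc t₀ t₁) :=
    (continuous_id.matrix_det).comp_continuousOn cA
  have cadj : ContinuousOn (fun t => (A t).adjugate) (Icc t₀ t₁) :=
    (continuous_id.matrix_adjugate).comp_continuousOn cA
  have cadje : ∀ i j, ContinuousOn (fun t => (A t).adjugate i j) (Icc t₀ t₁) := fun i j =>
    (continuous_id.matrix_adjugate.matrix_elem i j).comp_continuousOn cA
  have ctr : ContinuousOn (fun t => Matrix.trace ((A t).adjugate * A' t)) (Icc t₀ t₁) := by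
    have heq : (fun t => Matrix.trace ((A t).adjugate * A' t))
        = fun t => ∑ i, ∑ j, (A t).adjugate i j * A' t j i := by
      funext t
      simp [Matrix.trace, Matrix.diag, Matrix.mul_apply]
    rw [heq]
    exact continuousOn_finset_sum _ fun i _ => continuousOn_finset_sum _ fun j _ =>
      (cadje i j).mul (hA' j i)
  have cg : ContinuousOn g (Icc t₀ t₁) := by
    have h2 : ContinuousOn (fun t => ((A t).det)⁻¹ * Matrix.trace ((A t).adjugate * A' t))
        (Icc t₀ t₁) := (cdet.inv₀ fun t htI => (hdet t htI).ne').mul ctr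
    exact h2.congr htrace
  have gInt : IntervalIntegrable g MeasureTheory.volume t₀ t₁ := by
    apply ContinuousOn.intervalIntegrable
    rwa [uIcc_of_le ht.le]
  have fInt : IntervalIntegrable f MeasureTheory.volume t₀ t₁ := hf.intervalIntegrable _ _
  have hftc : ∫ t in t₀..t₁, g t = Real.log (A t₁).det - Real.log (A t₀).det := by
    apply intervalIntegral.integral_eq_sub_of_hasDerivAt
    · intro t htI
      rw [uIcc_of_le ht.le] at htI
      exact hld t htI
    · exact gInt
  have hmono : ∫ t in t₀..t₁, g t ≤ ∫ t in t₀..t₁, f t :=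
    intervalIntegral.integral_mono_on ht.le gInt fInt htr
  have hratio : 0 < (A t₁).det / (A t₀).det := div_pos (hdet t₁ ht1mem) (hdet t₀ ht0mem)
  have hlog : Real.log ((A t₁).det / (A t₀).det) ≤ ∫ t in t₀..t₁, f t := by
    rw [Real.log_div (hdet t₁ ht1mem).ne' (hdet t₀ ht0mem).ne']
    linarith [hftc ▸ hmono]
  have part1 : (A t₁).det / (A t₀).det ≤ Real.exp (∫ t in t₀..t₁, f t) :=
    (Real.log_le_iff_le_exp hratio).1 hlog
  refine ⟨part1, ?_⟩
  intro K c hc hKt hfeq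
  have hpos : ∀ t ∈ Icc t₀ t₁, 0 < t ∧ (0 < K → Real.sqrt K * t < π) := by
    intro t htI
    refine ⟨lt_of_lt_of_le ht₀ htI.1, fun hK => ?_⟩
    have hs : (0:ℝ) < Real.sqrt K := Real.sqrt_pos.2 hK
    have := hKt hK
    calc Real.sqrt K * t ≤ Real.sqrt K * t₁ := by nlinarith [htI.2]
      _ < Real.sqrt K * (π / Real.sqrt K) := by nlinarith
      _ = π := by field_simp
  have hb0 : 0 < bK K t₀ := bK_pos (hpos t₀ ht0mem).1 (hpos t₀ ht0mem).2
  have hb1 : 0 < bK K t₁ := bK_pos (hpos t₁ ht1mem).1 (hpos t₁ ht1mem).2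
  have hFderiv : ∀ t ∈ uIcc t₀ t₁,
      HasDerivAt (fun s => (1 / c) * Real.log (bK K s)) (f t) t := by
    intro t htI
    rw [uIcc_of_le ht.le] at htI
    rw [hfeq t htI]
    exact (hasDerivAt_log_bK (hpos t htI).1 (hpos t htI).2).const_mul (1 / c)
  have hint : ∫ t in t₀..t₁, f t
      = (1 / c) * Real.log (bK K t₁) - (1 / c) * Real.log (bK K t₀) :=
    intervalIntegral.integral_eq_sub_of_hasDerivAt hFderiv fInt
  refine part1.trans (le_of_eq ?_)
  rw [hint, Real.rpow_def_of_pos (div_pos hb1 hb0),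
    Real.log_div hb1.ne' hb0.ne']
  ring_nf
end
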